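/- arXiv:math/0309009 — 2 statements merged into one kernel-verified Lean document; each statement's English description precedes it below -/
import Mathlib

section
/- Let X_1, ..., X_n be (dependent) real random variables such that for each i, conditionally on X_1,...,X_{i-1}, one has P(X_i > λ) ≤ C₁ e^{-c₁ λ} for all λ > 0, where C₁, c₁ > 0 are constants. Then there exist constants C, c > 0 depending only on C₁, c₁ such that P(∑_{i=1}^n X_i > λ n) ≤ C e^{-c λ} for all λ > 0. -/
open MeasureTheory ProbabilityTheory
open scoped ENNReal NNReal

section Aux

variable {Ω : Type} [mΩ : MeasurableSpace Ω] {P : Measure Ω} [IsProbabilityMeasure P]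

lemma aux_integrable {f : Ω → ℝ} (hf : Measurable f) (b : ℝ) (hb : ∀ ω, |f ω| ≤ b) :
    Integrable f P :=
  Integrable.mono' (integrable_const b) hf.aestronglyMeasurable
    (Filter.Eventually.of_forall fun ω => by simpa [Real.norm_eq_abs] using hb ω)

/-- Key lemma: from the a.e. bound on the conditional expectation of the indicator,
deduce `∫ F · 1_B ≤ q ∫ F` for nonnegative bounded `m`-measurable `F`. -/
lemma aux_mul_indicator_le {m : MeasurableSpace Ω} (hm : m ≤ mΩ)
    {F : Ω → ℝ} (hFm : Measurable[m] F) (hF0 : ∀ ω, 0 ≤ F ω) (b : ℝ) (hFb : ∀ ω, F ω ≤ b)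
    {B : Set Ω} (hB : MeasurableSet[mΩ] B) {q : ℝ}
    (h : ∀ᵐ ω ∂P, (P[Set.indicator B (fun _ => (1 : ℝ)) | m]) ω ≤ q) :
    ∫ ω, F ω * Set.indicator B (fun _ => (1 : ℝ)) ω ∂P ≤ q * ∫ ω, F ω ∂P := by
  have hF : Measurable[mΩ] F := hFm.mono hm le_rfl
  set f : Ω → ℝ := Set.indicator B (fun _ => (1 : ℝ)) with hf_def
  have hf_meas : Measurable[mΩ] f := measurable_const.indicator hB
  have hf01 : ∀ ω, 0 ≤ f ω ∧ f ω ≤ 1 := fun ω => by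
    by_cases hω : ω ∈ B <;> simp [hf_def, Set.indicator, hω]
  have hf_int : Integrable f P :=
    aux_integrable (mΩ := mΩ) hf_meas 1
      (fun ω => abs_le.2 ⟨by linarith [(hf01 ω).1], (hf01 ω).2⟩)
  have hFf_int : Integrable (F * f) P := by
    refine aux_integrable (mΩ := mΩ) (hF.mul hf_meas) |b| (fun ω => ?_)
    have h1 := (hf01 ω).1; have h2 := (hf01 ω).2
    have h3 := hF0 ω; have h4 := hFb ω
    have h5 : b ≤ |b| := le_abs_self b
    rw [abs_le]
    refine ⟨?_, ?_⟩
    · show -|b| ≤ F ω * f ω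
      nlinarith [abs_nonneg b]
    · show F ω * f ω ≤ |b|
      nlinarith
  have key : P[F * f | m] =ᵐ[P] F * P[f | m] :=
    condExp_mul_of_stronglyMeasurable_left hFm.stronglyMeasurable hFf_int hf_int
  have hFsm : AEStronglyMeasurable[mΩ] F P := (hF.stronglyMeasurable).aestronglyMeasurable
  have hint1 : Integrable (fun ω => F ω * (P[f | m]) ω) P :=
    Integrable.bdd_mul (c := |b|) integrable_condExp hFsm
      (Filter.Eventually.of_forall fun ω => by
        rw [Real.norm_eq_abs, abs_le]
        exact ⟨by have := hF0 ω; have := abs_nonneg b; linarith,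
          (hFb ω).trans (le_abs_self b)⟩)
  have hint2 : Integrable (fun ω => F ω * q) P :=
    (aux_integrable (mΩ := mΩ) hF |b| (fun ω => abs_le.2
      ⟨by have := hF0 ω; have := abs_nonneg b; linarith,
        (hFb ω).trans (le_abs_self b)⟩)).mul_const q
  calc ∫ ω, F ω * f ω ∂P = ∫ ω, (P[F * f | m]) ω ∂P := (integral_condExp hm).symm
    _ = ∫ ω, F ω * (P[f | m]) ω ∂P := integral_congr_ae key
    _ ≤ ∫ ω, F ω * q ∂P := by
        refine integral_mono_ae hint1 hint2 ?_
        filter_upwards [h] with ω hω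
        exact mul_le_mul_of_nonneg_left hω (hF0 ω)
    _ = q * ∫ ω, F ω ∂P := by rw [integral_mul_const, mul_comm]

end Aux

/-- Layer-cake type pointwise bound with unit steps. -/
lemma aux_layer {t : ℝ} (ht : 0 < t) {m : ℕ} (hm : 1 ≤ m) (x : ℝ) :
    Real.exp (t * min x m) ≤
      Real.exp t + ∑ j ∈ Finset.range m,
        (if ((j : ℝ) + 1) < x then Real.exp (t * ((j : ℝ) + 2)) else 0) := by
  have hterm : ∀ j ∈ Finset.range m,
      (0:ℝ) ≤ if ((j : ℝ) + 1) < x then Real.exp (t * ((j : ℝ) + 2)) else 0 := by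
    intro j _; split_ifs <;> positivity
  rcases le_or_gt x 1 with hx | hx
  · have h1 : Real.exp (t * min x m) ≤ Real.exp t := by
      apply Real.exp_le_exp.2
      have : min x (m:ℝ) ≤ 1 := le_trans (min_le_left _ _) hx
      nlinarith
    exact h1.trans (le_add_of_nonneg_right (Finset.sum_nonneg hterm))
  · obtain ⟨j, hjm, hjx, hxj⟩ : ∃ j, j ∈ Finset.range m ∧ ((j : ℝ) + 1) < x ∧
        min x (m:ℝ) ≤ (j : ℝ) + 2 := by
      rcases lt_or_ge (m:ℝ) x with hmx | hmx
      · refine ⟨m - 1, Finset.mem_range.2 (by omega), ?_, ?_⟩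
        · have h1 : ((m - 1 : ℕ) : ℝ) + 1 = (m : ℝ) := by
            push_cast [Nat.cast_sub hm]; ring
          rw [h1]; exact hmx
        · have h1 : ((m - 1 : ℕ) : ℝ) + 2 = (m : ℝ) + 1 := by
            push_cast [Nat.cast_sub hm]; ring
          rw [h1]
          exact le_trans (min_le_right _ _) (by linarith)
      · have hx0 : (0:ℝ) ≤ x := by linarith
        have hceil2 : 2 ≤ ⌈x⌉₊ := by
          have : 1 < ⌈x⌉₊ := Nat.lt_ceil.2 (by exact_mod_cast hx)
          omega
        have hceilm : ⌈x⌉₊ ≤ m := Nat.ceil_le.2 hmx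
        refine ⟨⌈x⌉₊ - 2, Finset.mem_range.2 (by omega), ?_, ?_⟩
        · have hc : ((⌈x⌉₊ - 2 : ℕ) : ℝ) + 1 = (⌈x⌉₊ : ℝ) - 1 := by
            push_cast [Nat.cast_sub hceil2]; ring
          rw [hc]
          have := Nat.ceil_lt_add_one hx0
          linarith
        · have hc : ((⌈x⌉₊ - 2 : ℕ) : ℝ) + 2 = (⌈x⌉₊ : ℝ) := by
            push_cast [Nat.cast_sub hceil2]; ring
          rw [hc]
          exact le_trans (min_le_left _ _) (Nat.le_ceil x)
    have h1 : Real.exp (t * min x m) ≤ Real.exp (t * ((j:ℝ) + 2)) :=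
      Real.exp_le_exp.2 (mul_le_mul_of_nonneg_left hxj ht.le)
    have h2 : Real.exp (t * ((j:ℝ) + 2)) ≤ ∑ j ∈ Finset.range m,
        (if ((j : ℝ) + 1) < x then Real.exp (t * ((j : ℝ) + 2)) else 0) := by
      have h3 := Finset.single_le_sum hterm hjm
      rwa [if_pos hjx] at h3
    calc Real.exp (t * min x m) ≤ Real.exp (t * ((j:ℝ) + 2)) := h1
      _ ≤ _ := h2
      _ ≤ _ := le_add_of_nonneg_left (Real.exp_pos t).le

/-- If `X_0, …, X_{n-1}` are real random variables such that each `X_i`,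
conditionally on `X_0, …, X_{i-1}`, satisfies the exponential tail bound
`P(X_i > λ) ≤ C₁ e^{-c₁ λ}` for all `λ > 0`, then there are constants `C, c > 0`
depending only on `C₁, c₁` (not on `n`) such that
`P(∑ X_i > λ n) ≤ C e^{-c λ}` for all `λ > 0`. -/
theorem sum_of_conditionally_exponential_tails
    (C₁ c₁ : ℝ) (hC₁ : 0 < C₁) (hc₁ : 0 < c₁) :
    ∃ C > 0, ∃ c > 0,
      ∀ (Ω : Type) (_ : MeasurableSpace Ω) (P : Measure Ω),
        IsProbabilityMeasure P →
        ∀ (n : ℕ) (X : ℕ → Ω → ℝ), (∀ i, Measurable (X i)) →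
        (∀ i, i < n → ∀ lam : ℝ, 0 < lam →
          ∀ᵐ ω ∂P,
            (P[Set.indicator {ω' | lam < X i ω'} (fun _ => (1 : ℝ)) |
                ⨆ j ∈ Finset.range i, MeasurableSpace.comap (X j) inferInstance]) ω
              ≤ C₁ * Real.exp (-c₁ * lam)) →
        ∀ lam : ℝ, 0 < lam →
          P {ω | lam * n < ∑ i ∈ Finset.range n, X i ω}
            ≤ ENNReal.ofReal (C * Real.exp (-c * lam)) := by
  set t : ℝ := c₁ / 2 with ht_def
  have ht : 0 < t := by positivity
  set M : ℝ := Real.exp t + C₁ * (1 - Real.exp (-t))⁻¹ with hM_def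
  have hexp_lt_one : Real.exp (-t) < 1 := Real.exp_lt_one_iff.2 (by linarith)
  have hexp_pos : 0 < Real.exp (-t) := Real.exp_pos _
  have hM1 : 1 < M := by
    have h1 : (1:ℝ) < Real.exp t := Real.one_lt_exp_iff.2 ht
    have h2 : 0 < C₁ * (1 - Real.exp (-t))⁻¹ := by
      apply mul_pos hC₁; rw [inv_pos]; linarith
    rw [hM_def]; linarith
  have hM0 : 0 < M := by linarith
  refine ⟨M, hM0, t, ht, ?_⟩
  intro Ω mΩ P hP n X hX hcond lam hlam
  -- the truncated exponential products
  set G : ℕ → ℕ → Ω → ℝ :=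
    fun m k ω => ∏ i ∈ Finset.range k, Real.exp (t * min (X i ω) (m:ℝ)) with hG_def
  have hfac : ∀ (i m : ℕ), Measurable (fun ω => Real.exp (t * min (X i ω) (m:ℝ))) :=
    fun i m => Real.measurable_exp.comp (((hX i).min measurable_const).const_mul t)
  have hG_meas : ∀ m k, Measurable (G m k) :=
    fun m k => Finset.measurable_prod _ fun i _ => hfac i m
  have hG_nonneg : ∀ m k ω, 0 ≤ G m k ω :=
    fun m k ω => Finset.prod_nonneg fun i _ => (Real.exp_pos _).le
  have hG_le : ∀ m k ω, G m k ω ≤ Real.exp (t * m) ^ k := by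
    intro m k ω
    calc G m k ω ≤ ∏ _i ∈ Finset.range k, Real.exp (t * m) := by
          refine Finset.prod_le_prod (fun i _ => (Real.exp_pos _).le) (fun i _ => ?_)
          exact Real.exp_le_exp.2 (mul_le_mul_of_nonneg_left (min_le_right _ _) ht.le)
      _ = Real.exp (t * m) ^ k := by rw [Finset.prod_const, Finset.card_range]
  have hG_int : ∀ m k, Integrable (G m k) P := by
    intro m k
    refine aux_integrable (hG_meas m k) (Real.exp (t * m) ^ k) (fun ω => ?_)
    rw [abs_of_nonneg (hG_nonneg m k ω)]
    exact hG_le m k ω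
  -- the filtration σ-algebras
  have hmk_le : ∀ k, (⨆ j ∈ Finset.range k, MeasurableSpace.comap (X j) inferInstance) ≤ mΩ :=
    fun k => iSup₂_le fun j _ => (hX j).comap_le
  have hGm : ∀ m k,
      Measurable[⨆ j ∈ Finset.range k, MeasurableSpace.comap (X j) inferInstance] (G m k) := by
    intro m k
    refine Finset.measurable_prod _ fun i hi => ?_
    have h1 : Measurable[MeasurableSpace.comap (X i) inferInstance] (X i) :=
      fun s hs => ⟨s, hs, rfl⟩
    have h2 : MeasurableSpace.comap (X i) inferInstance ≤
        ⨆ j ∈ Finset.range k, MeasurableSpace.comap (X j) inferInstance :=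
      le_iSup₂ (f := fun j (_ : j ∈ Finset.range k) =>
        MeasurableSpace.comap (X j) inferInstance) i hi
    exact Real.measurable_exp.comp (((h1.mono h2 le_rfl).min measurable_const).const_mul t)
  -- one induction step
  have step : ∀ (m : ℕ), 1 ≤ m → ∀ k, k < n →
      ∫ ω, G m (k+1) ω ∂P ≤ M * ∫ ω, G m k ω ∂P := by
    intro m hm k hk
    set Bj : ℕ → Set Ω := fun j => {ω' | ((j:ℝ) + 1) < X k ω'} with hBj_def
    have hBj_meas : ∀ j, MeasurableSet (Bj j) :=
      fun j => measurableSet_lt measurable_const (hX k)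
    have hGind_int : ∀ j, Integrable
        (fun ω => G m k ω * Set.indicator (Bj j) (fun _ => (1:ℝ)) ω) P := by
      intro j
      refine aux_integrable ((hG_meas m k).mul (measurable_const.indicator (hBj_meas j)))
        (Real.exp (t * m) ^ k) (fun ω => ?_)
      by_cases hω : ω ∈ Bj j
      · rw [Set.indicator_of_mem hω, mul_one, abs_of_nonneg (hG_nonneg m k ω)]
        exact hG_le m k ω
      · rw [Set.indicator_of_notMem hω, mul_zero, abs_zero]
        positivity
    -- pointwise layer bound after multiplying by G m k
    have hpoint : ∀ ω, G m (k+1) ω ≤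
        Real.exp t * G m k ω + ∑ j ∈ Finset.range m,
          Real.exp (t * ((j:ℝ) + 2)) *
            (G m k ω * Set.indicator (Bj j) (fun _ => (1:ℝ)) ω) := by
      intro ω
      have hexpand : G m (k+1) ω = G m k ω * Real.exp (t * min (X k ω) (m:ℝ)) :=
        Finset.prod_range_succ _ _
      have hlayer := aux_layer ht hm (X k ω)
      have h1 : G m (k+1) ω ≤ G m k ω * (Real.exp t + ∑ j ∈ Finset.range m,
          (if ((j : ℝ) + 1) < X k ω then Real.exp (t * ((j : ℝ) + 2)) else 0)) := by
        rw [hexpand]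
        exact mul_le_mul_of_nonneg_left hlayer (hG_nonneg m k ω)
      refine h1.trans (le_of_eq ?_)
      rw [mul_add, Finset.mul_sum, mul_comm (G m k ω) (Real.exp t)]
      congr 1
      refine Finset.sum_congr rfl fun j _ => ?_
      rw [Set.indicator_apply]
      simp only [hBj_def, Set.mem_setOf_eq]
      split_ifs with hc
      · ring
      · ring
    have hRHS_int : Integrable (fun ω => Real.exp t * G m k ω + ∑ j ∈ Finset.range m,
        Real.exp (t * ((j:ℝ) + 2)) *
          (G m k ω * Set.indicator (Bj j) (fun _ => (1:ℝ)) ω)) P := by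
      refine Integrable.add ((hG_int m k).const_mul _) ?_
      refine integrable_finset_sum _ fun j _ => ((hGind_int j).const_mul _)
    have hsplit : ∫ ω, (Real.exp t * G m k ω + ∑ j ∈ Finset.range m,
        Real.exp (t * ((j:ℝ) + 2)) *
          (G m k ω * Set.indicator (Bj j) (fun _ => (1:ℝ)) ω)) ∂P
        = Real.exp t * ∫ ω, G m k ω ∂P + ∑ j ∈ Finset.range m,
          Real.exp (t * ((j:ℝ) + 2)) *
            ∫ ω, G m k ω * Set.indicator (Bj j) (fun _ => (1:ℝ)) ω ∂P := by
      rw [integral_add ((hG_int m k).const_mul _)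
        (integrable_finset_sum _ fun j _ => ((hGind_int j).const_mul _)),
        integral_const_mul, integral_finset_sum _ fun j _ => ((hGind_int j).const_mul _)]
      congr 1
      exact Finset.sum_congr rfl fun j _ => integral_const_mul _ _
    have hIG_nonneg : 0 ≤ ∫ ω, G m k ω ∂P := integral_nonneg (hG_nonneg m k)
    have hterm : ∀ j ∈ Finset.range m,
        Real.exp (t * ((j:ℝ) + 2)) *
          ∫ ω, G m k ω * Set.indicator (Bj j) (fun _ => (1:ℝ)) ω ∂P
        ≤ C₁ * Real.exp (-t) ^ j * ∫ ω, G m k ω ∂P := by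
      intro j _
      have hpos : (0:ℝ) < (j:ℝ) + 1 := by positivity
      have hb := aux_mul_indicator_le (hmk_le k) (hGm m k) (hG_nonneg m k)
        (Real.exp (t * m) ^ k) (hG_le m k) (hBj_meas j)
        (hcond k hk ((j:ℝ) + 1) hpos)
      have h1 : Real.exp (t * ((j:ℝ) + 2)) *
          ∫ ω, G m k ω * Set.indicator (Bj j) (fun _ => (1:ℝ)) ω ∂P
          ≤ Real.exp (t * ((j:ℝ) + 2)) *
            (C₁ * Real.exp (-c₁ * ((j:ℝ) + 1)) * ∫ ω, G m k ω ∂P) :=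
        mul_le_mul_of_nonneg_left hb (Real.exp_pos _).le
      refine h1.trans (le_of_eq ?_)
      rw [← mul_assoc]
      congr 1
      have h2 : Real.exp (-t) ^ j = Real.exp ((j:ℝ) * (-t)) := (Real.exp_nat_mul _ j).symm
      rw [h2, mul_comm (Real.exp (t * ((j:ℝ) + 2))), mul_assoc, ← Real.exp_add]
      congr 1
      rw [ht_def]; ring
    have hcoeff : Real.exp t + ∑ j ∈ Finset.range m, C₁ * Real.exp (-t) ^ j ≤ M := by
      rw [← Finset.mul_sum]
      have h1 : ∑ j ∈ Finset.range m, Real.exp (-t) ^ j ≤ (1 - Real.exp (-t))⁻¹ := by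
        have h2 := Summable.sum_le_tsum (Finset.range m)
          (fun i _ => pow_nonneg hexp_pos.le i)
          (summable_geometric_of_lt_one hexp_pos.le hexp_lt_one)
        rwa [tsum_geometric_of_lt_one hexp_pos.le hexp_lt_one] at h2
      have h3 : C₁ * ∑ j ∈ Finset.range m, Real.exp (-t) ^ j ≤ C₁ * (1 - Real.exp (-t))⁻¹ :=
        mul_le_mul_of_nonneg_left h1 hC₁.le
      rw [hM_def]; linarith
    calc ∫ ω, G m (k+1) ω ∂P
        ≤ ∫ ω, (Real.exp t * G m k ω + ∑ j ∈ Finset.range m,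
            Real.exp (t * ((j:ℝ) + 2)) *
              (G m k ω * Set.indicator (Bj j) (fun _ => (1:ℝ)) ω)) ∂P :=
          integral_mono (hG_int m (k+1)) hRHS_int hpoint
      _ = Real.exp t * ∫ ω, G m k ω ∂P + ∑ j ∈ Finset.range m,
            Real.exp (t * ((j:ℝ) + 2)) *
              ∫ ω, G m k ω * Set.indicator (Bj j) (fun _ => (1:ℝ)) ω ∂P := hsplit
      _ ≤ Real.exp t * ∫ ω, G m k ω ∂P + ∑ j ∈ Finset.range m,
            C₁ * Real.exp (-t) ^ j * ∫ ω, G m k ω ∂P := by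
          exact add_le_add le_rfl (Finset.sum_le_sum hterm)
      _ = (Real.exp t + ∑ j ∈ Finset.range m, C₁ * Real.exp (-t) ^ j) * ∫ ω, G m k ω ∂P := by
          rw [add_mul, Finset.sum_mul]
      _ ≤ M * ∫ ω, G m k ω ∂P := mul_le_mul_of_nonneg_right hcoeff hIG_nonneg
  -- the moment bound by induction
  have prod_le : ∀ (m : ℕ), 1 ≤ m → ∀ k, k ≤ n → ∫ ω, G m k ω ∂P ≤ M ^ k := by
    intro m hm k
    induction k with
    | zero =>
        intro _
        have : G m 0 = fun _ => (1:ℝ) := by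
          funext ω; simp [hG_def]
        rw [this]
        simp
    | succ k ih =>
        intro hk
        have h1 := step m hm k (by omega)
        have h2 := ih (by omega)
        calc ∫ ω, G m (k+1) ω ∂P ≤ M * ∫ ω, G m k ω ∂P := h1
          _ ≤ M * M ^ k := mul_le_mul_of_nonneg_left h2 hM0.le
          _ = M ^ (k+1) := by ring
  -- single-variable tail bound
  have tail : ∀ i, i < n → ∀ R : ℝ, 0 < R →
      P {ω | R < X i ω} ≤ ENNReal.ofReal (C₁ * Real.exp (-c₁ * R)) := by
    intro i hi R hR
    have hB : MeasurableSet {ω | R < X i ω} := measurableSet_lt measurable_const (hX i)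
    have hb := aux_mul_indicator_le (P := P) (hmk_le i)
      (measurable_const (a := (1:ℝ))) (fun _ => zero_le_one) 1 (fun _ => le_rfl) hB
      (hcond i hi R hR)
    simp only [one_mul] at hb
    rw [integral_indicator_const (1:ℝ) hB] at hb
    simp only [one_mul, smul_eq_mul, mul_one, integral_const, measure_univ,
      ENNReal.toReal_one, probReal_univ] at hb
    refine (ENNReal.le_ofReal_iff_toReal_le (measure_ne_top P _) (by positivity)).2 ?_
    exact hb
  -- main Chernoff-type estimate with truncation level m
  have core : ∀ (m : ℕ), 1 ≤ m →
      P {ω | lam * n < ∑ i ∈ Finset.range n, X i ω}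
        ≤ ENNReal.ofReal (Real.exp (-(t * lam * n)) * M ^ n)
          + n * ENNReal.ofReal (C₁ * Real.exp (-c₁ * m)) := by
    intro m hm
    have hmpos : (0:ℝ) < m := by exact_mod_cast hm
    set S : Set Ω := {ω | lam * n < ∑ i ∈ Finset.range n, X i ω} with hS_def
    have hS_meas : MeasurableSet S :=
      measurableSet_lt measurable_const (Finset.measurable_sum _ fun i _ => hX i)
    set good : Set Ω := S ∩ ⋂ i ∈ Finset.range n, {ω | X i ω ≤ (m:ℝ)} with hgood_def
    have hgood_meas : MeasurableSet good := by
      refine hS_meas.inter ?_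
      exact MeasurableSet.iInter fun i => MeasurableSet.iInter fun _ =>
        measurableSet_le (hX i) measurable_const
    have hsub : S ⊆ good ∪ ⋃ i ∈ Finset.range n, {ω | (m:ℝ) < X i ω} := by
      intro ω hω
      by_cases hgood : ∀ i ∈ Finset.range n, X i ω ≤ (m:ℝ)
      · left
        exact ⟨hω, Set.mem_iInter₂.2 hgood⟩
      · right
        push_neg at hgood
        obtain ⟨i, hi, hXi⟩ := hgood
        exact Set.mem_biUnion hi hXi
    have hbad : P (⋃ i ∈ Finset.range n, {ω | (m:ℝ) < X i ω})
        ≤ n * ENNReal.ofReal (C₁ * Real.exp (-c₁ * m)) := by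
      calc P (⋃ i ∈ Finset.range n, {ω | (m:ℝ) < X i ω})
          ≤ ∑ i ∈ Finset.range n, P {ω | (m:ℝ) < X i ω} :=
            measure_biUnion_finset_le _ _
        _ ≤ ∑ _i ∈ Finset.range n, ENNReal.ofReal (C₁ * Real.exp (-c₁ * m)) := by
            refine Finset.sum_le_sum fun i hi => ?_
            exact tail i (Finset.mem_range.1 hi) m hmpos
        _ = n * ENNReal.ofReal (C₁ * Real.exp (-c₁ * m)) := by
            rw [Finset.sum_const, Finset.card_range, nsmul_eq_mul]
    have hgood_bound : P good ≤ ENNReal.ofReal (Real.exp (-(t * lam * n)) * M ^ n) := by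
      have hpoint : ∀ ω, Set.indicator good (fun _ => (1:ℝ)) ω
          ≤ Real.exp (-(t * lam * n)) * G m n ω := by
        intro ω
        by_cases hω : ω ∈ good
        · rw [Set.indicator_of_mem hω]
          obtain ⟨hωS, hωbd⟩ := hω
          have hbd : ∀ i ∈ Finset.range n, X i ω ≤ (m:ℝ) := fun i hi => by
            have h := Set.mem_iInter₂.1 hωbd i hi
            exact h
          have hGe : G m n ω = Real.exp (t * ∑ i ∈ Finset.range n, X i ω) := by
            simp only [hG_def]
            rw [Finset.mul_sum, Real.exp_sum]
            refine Finset.prod_congr rfl fun i hi => ?_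
            rw [min_eq_left (hbd i hi)]
          rw [hGe, ← Real.exp_add]
          refine Real.one_le_exp ?_
          have h1 : lam * n < ∑ i ∈ Finset.range n, X i ω := hωS
          nlinarith
        · rw [Set.indicator_of_notMem hω]
          have := hG_nonneg m n ω
          positivity
      have hint : Integrable (fun ω => Real.exp (-(t * lam * n)) * G m n ω) P :=
        (hG_int m n).const_mul _
      calc P good = ∫⁻ ω, Set.indicator good 1 ω ∂P := (lintegral_indicator_one hgood_meas).symm
        _ ≤ ∫⁻ ω, ENNReal.ofReal (Real.exp (-(t * lam * n)) * G m n ω) ∂P := by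
            refine lintegral_mono fun ω => ?_
            by_cases hω : ω ∈ good
            · have h1 := hpoint ω
              rw [Set.indicator_of_mem hω] at h1 ⊢
              simpa using ENNReal.one_le_ofReal.2 h1
            · rw [Set.indicator_of_notMem hω]
              exact bot_le
        _ = ENNReal.ofReal (∫ ω, Real.exp (-(t * lam * n)) * G m n ω ∂P) :=
            (ofReal_integral_eq_lintegral_ofReal hint
              (Filter.Eventually.of_forall fun ω => by
                have := hG_nonneg m n ω; positivity)).symm
        _ ≤ ENNReal.ofReal (Real.exp (-(t * lam * n)) * M ^ n) := by
            refine ENNReal.ofReal_le_ofReal ?_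
            rw [integral_const_mul]
            exact mul_le_mul_of_nonneg_left (prod_le m hm n le_rfl) (Real.exp_pos _).le
    calc P S ≤ P (good ∪ ⋃ i ∈ Finset.range n, {ω | (m:ℝ) < X i ω}) := measure_mono hsub
      _ ≤ P good + P (⋃ i ∈ Finset.range n, {ω | (m:ℝ) < X i ω}) := measure_union_le _ _
      _ ≤ ENNReal.ofReal (Real.exp (-(t * lam * n)) * M ^ n)
          + n * ENNReal.ofReal (C₁ * Real.exp (-c₁ * m)) := add_le_add hgood_bound hbad
  -- wrap up
  by_cases hn : n = 0
  · subst hn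
    have hempty : {ω : Ω | lam * (0:ℕ) < ∑ i ∈ Finset.range 0, X i ω} = ∅ := by
      ext ω; simp
    rw [hempty, measure_empty]
    exact bot_le
  · have hn1 : 1 ≤ n := Nat.one_le_iff_ne_zero.2 hn
    rcases le_or_gt 1 (M * Real.exp (-t * lam)) with hbig | hsmall
    · calc P _ ≤ 1 := prob_le_one
        _ ≤ ENNReal.ofReal (M * Real.exp (-t * lam)) := ENNReal.one_le_ofReal.2 hbig
    · have hx0 : 0 ≤ M * Real.exp (-t * lam) := by positivity
      have main : P {ω | lam * n < ∑ i ∈ Finset.range n, X i ω}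
          ≤ ENNReal.ofReal ((M * Real.exp (-t * lam)) ^ n) := by
        refine ENNReal.le_of_forall_pos_le_add fun ε hε _ => ?_
        have hnC₁ : (0:ℝ) < n * C₁ := by positivity
        set δ : ℝ := (ε:ℝ) / (n * C₁) with hδ_def
        have hδ : 0 < δ := by
          refine div_pos ?_ hnC₁
          exact_mod_cast hε
        obtain ⟨m, hm⟩ := exists_nat_gt (max 1 (-Real.log δ / c₁))
        have hm1 : 1 ≤ m := by
          have h1 : (1:ℝ) < m := lt_of_le_of_lt (le_max_left _ _) hm
          exact_mod_cast h1.le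
        have hexpδ : Real.exp (-c₁ * m) ≤ δ := by
          rw [← Real.exp_log hδ]
          apply Real.exp_le_exp.2
          have h1 : -Real.log δ / c₁ < m := lt_of_le_of_lt (le_max_right _ _) hm
          have h2 : -Real.log δ < m * c₁ := by
            rwa [div_lt_iff₀ hc₁] at h1
          linarith
        have htailbound : (n : ℝ≥0∞) * ENNReal.ofReal (C₁ * Real.exp (-c₁ * m)) ≤ (ε : ℝ≥0∞) := by
          rw [← ENNReal.ofReal_natCast n, ← ENNReal.ofReal_mul (Nat.cast_nonneg n)]
          rw [← ENNReal.ofReal_coe_nnreal]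
          refine ENNReal.ofReal_le_ofReal ?_
          have h1 : (n:ℝ) * (C₁ * Real.exp (-c₁ * m)) ≤ (n:ℝ) * (C₁ * δ) := by
            have := Real.exp_pos (-c₁ * (m:ℝ))
            nlinarith
          refine h1.trans (le_of_eq ?_)
          rw [hδ_def]
          field_simp
        have heq : Real.exp (-(t * lam * n)) * M ^ n = (M * Real.exp (-t * lam)) ^ n := by
          rw [mul_pow]
          have h1 : Real.exp (-(t * lam * n)) = Real.exp (-t * lam) ^ n := by
            rw [← Real.exp_nat_mul]
            congr 1
            ring
          rw [h1]
          ring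
        calc P {ω | lam * n < ∑ i ∈ Finset.range n, X i ω}
            ≤ ENNReal.ofReal (Real.exp (-(t * lam * n)) * M ^ n)
              + n * ENNReal.ofReal (C₁ * Real.exp (-c₁ * m)) := core m hm1
          _ ≤ ENNReal.ofReal ((M * Real.exp (-t * lam)) ^ n) + (ε : ℝ≥0∞) := by
              rw [heq]
              exact add_le_add le_rfl htailbound
      refine main.trans ?_
      refine ENNReal.ofReal_le_ofReal ?_
      exact pow_le_of_le_one hx0 hsmall.le hn
end

section
/- Let R be a path (finite sequence of adjacent vertices) in a graph, and suppose t is a cut time of R, i.e., R[0,t] ∩ R(t, end] = ∅. Then R(t) belongs to the loop-erasure LE(R). Moreover, if t₁ < t₂ are two distinct cut times then R(t₁) ≠ R(t₂); consequently #LE(R) is at least the number of cut times of R. -/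
/-- Chronological loop-erasure of a finite path, given as a list of vertices. -/
def loopErase {V : Type*} [DecidableEq V] : List V → List V
  | [] => []
  | x :: xs => x :: loopErase ((xs.reverse.takeWhile (· ≠ x)).reverse)
  termination_by l => l.length
  decreasing_by
    simp only [List.length_reverse, List.length_cons, List.unattach_reverse, List.unattach_attach]
    have := (List.takeWhile_sublist (l := xs.reverse) (fun y => decide (y ≠ x))).length_le
    simp only [List.length_reverse] at this
    omega

/-- `t` is a cut time of the path `l`: no point visited up to time `t` is visited again
after time `t`. -/
def IsCutTime {V : Type*} (l : List V) (t : Fin l.length) : Prop :=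
  ∀ s₁ s₂ : Fin l.length, s₁.val ≤ t.val → t.val < s₂.val → l.get s₁ ≠ l.get s₂

private lemma getElem_idx_congr {α : Type*} {l : List α} {a b : ℕ} (h : a = b)
    (ha : a < l.length) : l[a] = l[b]'(h ▸ ha) := by subst h; rfl

theorem mem_LE_aux {V : Type*} [DecidableEq V] :
    ∀ (n : ℕ) (l : List V), l.length ≤ n → ∀ t : Fin l.length, IsCutTime l t →
      l.get t ∈ loopErase l := by
  intro n
  induction n with
  | zero =>
    intro l hl t _
    exact absurd t.isLt (by omega)
  | succ n ih =>
    rintro (_ | ⟨x, xs⟩) hl t hcut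
    · exact absurd t.isLt (by simp)
    · rw [loopErase]
      set K := (xs.reverse.takeWhile (· ≠ x)).reverse with hK
      set D := (xs.reverse.dropWhile (· ≠ x)).reverse with hD
      have hsplit : xs = D ++ K := by
        rw [hD, hK, ← List.reverse_append, List.takeWhile_append_dropWhile,
          List.reverse_reverse]
      have hxslen : xs.length = D.length + K.length := by
        rw [hsplit]; simp
      have htlt : t.val < xs.length + 1 := by
        have := t.isLt; simp only [List.length_cons] at this; exact this
      by_cases hx : (x :: xs).get t = x
      · rw [hx]; exact List.mem_cons_self
      · have ht0 : 0 < t.val := by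
          rcases Nat.eq_zero_or_pos t.val with h | h
          · exact absurd (by simp [List.get_eq_getElem, h]) hx
          · exact h
        obtain ⟨j, hj⟩ : ∃ j, t.val = j + 1 := ⟨t.val - 1, by omega⟩
        have hjlt : j < xs.length := by omega
        have hget : (x :: xs).get t = xs[j] := by
          simp only [List.get_eq_getElem]
          rw [List.getElem_cons]
          split
          next h => exact absurd h (by omega)
          next h =>
            exact getElem_idx_congr (by omega) _
        -- x occurs at xs-index D.length - 1 if D nonempty
        have hDx : ∀ hne : D ≠ [], xs[D.length - 1]'(by
            have := List.length_pos_iff.mpr hne; omega) = x := by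
          intro hne
          have hd : D.length - 1 < D.length := by
            have := List.length_pos_iff.mpr hne; omega
          rw [List.getElem_of_eq hsplit, List.getElem_append_left hd]
          have hrev : D.reverse = xs.reverse.dropWhile (· ≠ x) := by
            rw [hD, List.reverse_reverse]
          have h0 : (0 : ℕ) < D.reverse.length := by
            simp only [List.length_reverse]
            have := List.length_pos_iff.mpr hne; omega
          have hne' : (xs.reverse.dropWhile (· ≠ x)) ≠ [] := by
            rw [← hrev]
            simpa using List.length_pos_iff.mp (by simpa using h0)
          have hx0 : D.reverse[0]'h0 = x := by
            rw [List.getElem_of_eq hrev, List.getElem_zero]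
            have := List.head_dropWhile_not (fun y => decide (y ≠ x)) (l := xs.reverse)
              (by simpa using hne')
            simpa using this
          rw [List.getElem_reverse] at hx0
          exact (getElem_idx_congr (by omega) _).trans hx0
        have hjD : D.length ≤ j := by
          by_contra hlt
          push_neg at hlt
          have hDne : D ≠ [] := by
            intro h; rw [h] at hlt; simp at hlt
          have hDpos : 0 < D.length := List.length_pos_iff.mpr hDne
          have hxind := hDx hDne
          rcases Nat.lt_or_ge t.val D.length with h1 | h1
          · -- x at position D.length > t
            refine hcut ⟨0, by simp⟩ ⟨D.length, by simp only [List.length_cons]; omega⟩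
              (by simp) (by simpa using h1) ?_
            simp only [List.get_eq_getElem, List.getElem_cons_zero]
            rw [List.getElem_cons]
            split
            next h => exact absurd h (by omega)
            next h => exact hxind.symm
          · -- t.val = D.length, so get t = x, contradiction
            exact hx (hget.trans
              ((getElem_idx_congr (show j = D.length - 1 by omega) hjlt).trans hxind))
        set i := j - D.length with hi
        have hiK : i < K.length := by omega
        have hgetK : (x :: xs).get t = K[i] := by
          rw [hget, List.getElem_of_eq hsplit, List.getElem_append_right (by omega)]
        have hcutK : IsCutTime K ⟨i, hiK⟩ := by
          intro s₁ s₂ h₁ h₂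
          have key : ∀ s : Fin K.length,
              K.get s = (x :: xs).get ⟨D.length + s.val + 1, by
                simp only [List.length_cons]; have := s.isLt; omega⟩ := by
            intro s
            simp only [List.get_eq_getElem]
            rw [List.getElem_cons]
            split
            next h => exact absurd h (by omega)
            next h =>
              rw [getElem_idx_congr (show D.length + s.val + 1 - 1 = D.length + s.val
                  by omega) (by have := s.isLt; omega),
                List.getElem_of_eq hsplit, List.getElem_append_right (by omega)]
              exact getElem_idx_congr (by omega) _
          rw [key s₁, key s₂]
          exact hcut _ _ (by simp only [] at h₁ ⊢; omega) (by simp only [] at h₂ ⊢; omega)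
        have hKle : K.length ≤ n := by
          have hlen : (x :: xs).length ≤ n + 1 := hl
          simp only [List.length_cons] at hlen
          omega
        have := ih K hKle ⟨i, hiK⟩ hcutK
        rw [hgetK]
        exact List.mem_cons_of_mem _ (by simpa using this)

/-- If `t` is a cut time of a path `l` then `l(t)` belongs to the
loop-erasure `LE(l)`; distinct cut times give distinct points; consequently the number of
cut times is at most `#LE(l)`. -/
theorem cut_times_in_loop_erasure {V : Type*} [DecidableEq V] (l : List V) :
    (∀ t : Fin l.length, IsCutTime l t → l.get t ∈ loopErase l) ∧
    (∀ t₁ t₂ : Fin l.length, IsCutTime l t₁ → IsCutTime l t₂ → t₁ ≠ t₂ →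
      l.get t₁ ≠ l.get t₂) ∧
    {t : Fin l.length | IsCutTime l t}.ncard ≤ (loopErase l).length := by
  have h1 : ∀ t : Fin l.length, IsCutTime l t → l.get t ∈ loopErase l :=
    mem_LE_aux l.length l le_rfl
  have h2 : ∀ t₁ t₂ : Fin l.length, IsCutTime l t₁ → IsCutTime l t₂ → t₁ ≠ t₂ →
      l.get t₁ ≠ l.get t₂ := by
    intro t₁ t₂ hc₁ hc₂ hne
    rcases lt_trichotomy t₁.val t₂.val with h | h | h
    · exact hc₁ t₁ t₂ le_rfl h
    · exact absurd (Fin.ext h) hne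
    · exact (hc₂ t₂ t₁ le_rfl h).symm
  refine ⟨h1, h2, ?_⟩
  set S := {t : Fin l.length | IsCutTime l t} with hS
  have hinj : Set.InjOn l.get S := by
    intro a ha b hb hab
    by_contra hne
    exact h2 a b ha hb hne hab
  have himg : l.get '' S ⊆ ↑(loopErase l).toFinset := by
    rintro y ⟨t, ht, rfl⟩
    simpa using h1 t ht
  calc S.ncard = (l.get '' S).ncard := (Set.ncard_image_of_injOn hinj).symm
    _ ≤ ((loopErase l).toFinset : Set V).ncard :=
        Set.ncard_le_ncard himg (Set.toFinite _)
    _ = (loopErase l).toFinset.card := Set.ncard_coe_finset _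
    _ ≤ (loopErase l).length := (loopErase l).toFinset_card_le
end
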